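/- Let D be a division ring with center F and let a be a non-central element of D that is torsion in the multiplicative group D^*. Then there exists a division subring D₁ of D that contains a, such that D₁ is finite-dimensional over its own center and a is not in the center of D₁. -/

import Mathlib

section KuroshAux

variable {D : Type*} [DivisionRing D]

lemma kurosh_conj_pow_eq (b a : D) (hb : b ≠ 0) (t : ℕ) :
    (b * a * b⁻¹) ^ t = b * a ^ t * b⁻¹ := by
  induction t with
  | zero => simp [mul_inv_cancel₀ hb]
  | succ t ih =>
      rw [pow_succ, ih, pow_succ]
      simp only [mul_assoc, inv_mul_cancel_left₀ hb]

lemma kurosh_inv_comm {x y : D} (h : x * y = y * x) : x * y⁻¹ = y⁻¹ * x := by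
  rcases eq_or_ne y 0 with rfl | hy
  · simp
  · have h1 : y⁻¹ * (x * y) * y⁻¹ = y⁻¹ * x := by
      rw [← mul_assoc, mul_assoc (y⁻¹ * x), mul_inv_cancel₀ hy, mul_one]
    have h2 : y⁻¹ * (y * x) * y⁻¹ = x * y⁻¹ := by
      rw [inv_mul_cancel_left₀ hy]
    rw [h] at h1
    rw [h1] at h2
    exact h2.symm

lemma kurosh_conj_eq_one {b x : D} (hb : b ≠ 0) (h : b * x * b⁻¹ = 1) : x = 1 := by
  have h3 : b * x = b := by
    have := congrArg (· * b) h
    simpa [mul_assoc, inv_mul_cancel₀ hb] using this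
  exact mul_left_cancel₀ hb (by rw [h3, mul_one])

lemma kurosh_inv_mem_centralizer {s : Set D} {x : D} (hx : x ∈ Subring.centralizer s) :
    x⁻¹ ∈ Subring.centralizer s := by
  rw [Subring.mem_centralizer_iff] at hx ⊢
  intro g hg
  exact kurosh_inv_comm (hx g hg)

lemma kurosh_conj_mul (c : D) (hc : c ≠ 0) (x y : D) :
    (c * x * c⁻¹) * (c * y * c⁻¹) = c * (x * y) * c⁻¹ := by
  rw [mul_assoc (c * x) c⁻¹, ← mul_assoc c⁻¹ (c * y) c⁻¹, inv_mul_cancel_left₀ hc,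
    ← mul_assoc, ← mul_assoc, mul_assoc c x y]

lemma kurosh_conj_comm {c x w : D} (hc : c ≠ 0) (hcomm : w * x = x * w) :
    (c * w * c⁻¹) * (c * x * c⁻¹) = (c * x * c⁻¹) * (c * w * c⁻¹) := by
  rw [kurosh_conj_mul c hc, kurosh_conj_mul c hc, hcomm]

lemma kurosh_conj_cancel1 (c x : D) (hc : c ≠ 0) : c⁻¹ * (c * x * c⁻¹) * c = x := by
  rw [← mul_assoc, ← mul_assoc, inv_mul_cancel₀ hc, one_mul, mul_assoc, inv_mul_cancel₀ hc,
    mul_one]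

lemma kurosh_conj_cancel2 (c x : D) (hc : c ≠ 0) : c * (c⁻¹ * x * c) * c⁻¹ = x := by
  have := kurosh_conj_cancel1 c⁻¹ x (inv_ne_zero hc)
  simpa [inv_inv] using this

/-- centralizer of a set in a division ring, as a subfield (division subring). -/
def kuroshCent (s : Set D) : Subfield D where
  toSubring := Subring.centralizer s
  inv_mem' := fun _ hx => kurosh_inv_mem_centralizer hx

lemma mem_kuroshCent {s : Set D} {x : D} : x ∈ kuroshCent s ↔ ∀ g ∈ s, g * x = x * g :=
  Subring.mem_centralizer_iff

lemma kurosh_orderOf_cast_ne_zero (a : D) (h : IsOfFinOrder a) : ((orderOf a : ℕ) : D) ≠ 0 := by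
  intro h0
  have hnpos : 0 < orderOf a := h.orderOf_pos
  haveI hcp : CharP D (ringChar D) := ringChar.charP D
  set p := ringChar D with hp
  have hpdvd : p ∣ orderOf a := (CharP.cast_eq_zero_iff D p _).mp h0
  have hp0 : p ≠ 0 := by
    intro hz
    rw [hz] at hpdvd
    omega
  haveI hprime : Fact (Nat.Prime p) := ⟨(CharP.char_is_prime_or_zero D p).resolve_right hp0⟩
  obtain ⟨m, hnm⟩ := hpdvd
  have hm : 0 < m := by
    rcases Nat.eq_zero_or_pos m with rfl | h'
    · simp only [mul_zero] at hnm; omega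
    · exact h'
  have h1 : (a ^ m - 1) ^ p = 0 := by
    rw [sub_pow_char_of_commute p (Commute.one_right _), one_pow, ← pow_mul, mul_comm m p, ← hnm,
      pow_orderOf_eq_one, sub_self]
  have h2 : a ^ m = 1 := by
    have := pow_eq_zero_iff (n := p) (by have := hprime.out.pos; omega) |>.mp h1
    rw [sub_eq_zero] at this
    exact this
  have hdvd := orderOf_dvd_of_pow_eq_one h2
  have := Nat.le_of_dvd hm hdvd
  nlinarith [hprime.out.two_le]

set_option linter.unnecessarySeqFocus false in
lemma kurosh_exists_conj_eq_pow (a : D) (n : ℕ) (hn : 0 < n) (han : a ^ n = 1)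
    (hord : ∀ k : ℕ, 0 < k → k < n → a ^ k ≠ 1)
    (hnD : ((n : ℕ) : D) ≠ 0)
    (hx' : ∃ x : D, ¬ a * x = x * a) :
    ∃ b : D, b ≠ 0 ∧ ∃ i : ℕ, 0 < i ∧ b * a = a ^ i * b ∧ a ^ i ≠ a := by
  obtain ⟨x, hx⟩ := hx'
  obtain ⟨n', rfl⟩ : ∃ n', n = n' + 1 := ⟨n - 1, by omega⟩
  set n := n' + 1 with hndef
  have ha0 : a ≠ 0 := by
    intro h
    rw [h, zero_pow (by omega)] at han
    exact zero_ne_one han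
  have hred : ∀ s : ℕ, a ^ s = a ^ (s % n) := by
    intro s
    conv_lhs => rw [← Nat.div_add_mod s n]
    rw [pow_add, pow_mul, han, one_pow, one_mul]
  have hred2 : ∀ s t : ℕ, s % n = t % n → a ^ s = a ^ t := by
    intro s t h
    rw [hred s, hred t, h]
  set g : ℕ → ℕ → D := fun p q => a ^ p * x * a ^ q with hg
  have gcongr : ∀ p q p' q' : ℕ, p % n = p' % n → q % n = q' % n → g p q = g p' q' := by
    intro p q p' q' h1 h2
    simp only [hg, hred2 _ _ h1, hred2 _ _ h2]
  have gmul_left : ∀ s p q : ℕ, a ^ s * g p q = g (s + p) q := by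
    intro s p q
    simp only [hg, pow_add, mul_assoc]
  have gmul_right : ∀ s p q : ℕ, g p q * a ^ s = g p (q + s) := by
    intro s p q
    simp only [hg, pow_add, mul_assoc]
  have gmul_left1 : ∀ p q : ℕ, a * g p q = g (1 + p) q := by
    intro p q
    rw [← gmul_left 1, pow_one]
  have gmul_right1 : ∀ p q : ℕ, g p q * a = g p (q + 1) := by
    intro p q
    rw [← gmul_right 1, pow_one]
  set u : ℕ → D := fun j => ∑ k ∈ Finset.range n, g (n'*(j*k) + k) (n'*k) with hu
  have claim1 : ∀ j, a * u j = a ^ j * (u j * a) := by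
    intro j
    have hL : a * u j = ∑ k ∈ Finset.range n, g (1 + (n'*(j*k) + k)) (n'*k) := by
      rw [hu, Finset.mul_sum]
      refine Finset.sum_congr rfl fun k _ => ?_
      rw [gmul_left1]
    have hR : a ^ j * (u j * a) =
        ∑ k ∈ Finset.range n, g (j + (n'*(j*k) + k)) (n'*k + 1) := by
      rw [hu, Finset.sum_mul, Finset.mul_sum]
      refine Finset.sum_congr rfl fun k _ => ?_
      rw [gmul_right1, gmul_left]
    rw [hL, hR]
    set h : ℕ → D := fun k => g (j + (n'*(j*k) + k)) (n'*k + 1) with hh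
    have key : ∀ k, g (1 + (n'*(j*k) + k)) (n'*k) = h (k+1) := by
      intro k
      rw [hh]
      refine (gcongr _ _ _ _ ?_ ?_).symm
      · have : j + (n'*(j*(k+1)) + (k+1)) = (1 + (n'*(j*k) + k)) + n * j := by
          rw [hndef]; ring
        rw [this, Nat.add_mul_mod_self_left]
      · have : n'*(k+1) + 1 = n'*k + n * 1 := by rw [hndef]; ring
        rw [this, Nat.add_mul_mod_self_left]
    have h0n : h n = h 0 := by
      rw [hh]
      refine gcongr _ _ _ _ ?_ ?_
      · have : j + (n'*(j*n) + n) = (j + (n'*(j*0) + 0)) + n * (n'*j + 1) := by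
          rw [hndef]; ring
        rw [this, Nat.add_mul_mod_self_left]
      · have : n'*n + 1 = (n'*0 + 1) + n * n' := by rw [hndef]; ring
        rw [this, Nat.add_mul_mod_self_left]
    have e1 := Finset.sum_range_succ' h n
    have e2 := Finset.sum_range_succ h n
    rw [e2, h0n] at e1
    have hshift : ∑ k ∈ Finset.range n, h (k+1) = ∑ k ∈ Finset.range n, h k :=
      add_right_cancel e1.symm
    calc ∑ k ∈ Finset.range n, g (1 + (n'*(j*k) + k)) (n'*k)
        = ∑ k ∈ Finset.range n, h (k+1) := Finset.sum_congr rfl fun k _ => key k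
      _ = ∑ k ∈ Finset.range n, h k := hshift
  have claim2 : ∑ j ∈ Finset.range n, u j = (n : D) * x := by
    rw [hu, Finset.sum_comm]
    have hterm : ∀ k ∈ Finset.range n,
        ∑ j ∈ Finset.range n, g (n'*(j*k) + k) (n'*k)
          = (∑ j ∈ Finset.range n, (a ^ (n'*k)) ^ j) * (a ^ k * x * a ^ (n'*k)) := by
      intro k _
      rw [Finset.sum_mul]
      refine Finset.sum_congr rfl fun j _ => ?_
      rw [← pow_mul]
      have : n'*k*j = n'*(j*k) := by ring
      rw [this, hg]
      simp only [pow_add, mul_assoc]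
    rw [Finset.sum_congr rfl hterm]
    rw [Finset.sum_eq_single_of_mem 0 (Finset.mem_range.mpr hn)]
    · simp only [Nat.mul_zero, pow_zero, one_pow, pow_zero, mul_one, one_mul]
      rw [Finset.sum_const, Finset.card_range]
      simp [nsmul_eq_mul]
    · intro k hk hk0
      have hkn : k < n := Finset.mem_range.mp hk
      have hkpos : 0 < k := Nat.pos_of_ne_zero hk0
      have hw1 : a ^ (n'*k) ≠ 1 := by
        intro hcon
        rcases Nat.eq_zero_or_pos n' with rfl | hn'pos
        · omega
        · have h3 : a ^ (n'*k % n) = 1 := by rw [← hred]; exact hcon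
          have h4 : n'*k % n ≠ 0 := by
            intro h5
            have h6 : n ∣ n'*k := Nat.dvd_of_mod_eq_zero h5
            have h7 : n ∣ n*k := Dvd.intro k rfl
            have h8 : n ∣ n*k - n'*k := Nat.dvd_sub h7 h6
            have h9 : n*k - n'*k = k := by rw [hndef]; cases k <;> ring_nf <;> omega
            rw [h9] at h8
            exact absurd (Nat.le_of_dvd hkpos h8) (by omega)
          exact hord _ (Nat.pos_of_ne_zero h4) (Nat.mod_lt _ hn) h3
      have hwn : (a ^ (n'*k)) ^ n = 1 := by
        rw [← pow_mul, mul_comm, pow_mul, han, one_pow]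
      rw [geom_sum_eq hw1, hwn, sub_self, zero_div, zero_mul]
  have hexists : ∃ j, 0 < j ∧ j < n ∧ u j ≠ 0 := by
    by_contra hcon
    push_neg at hcon
    have hzero : ∀ j ∈ Finset.range n, j ≠ 0 → u j = 0 := by
      intro j hj hj0
      exact hcon j (Nat.pos_of_ne_zero hj0) (Finset.mem_range.mp hj)
    have h1 : ∑ j ∈ Finset.range n, u j = u 0 :=
      Finset.sum_eq_single_of_mem 0 (Finset.mem_range.mpr hn) hzero
    rw [claim2] at h1
    have h2 := claim1 0
    rw [pow_zero, one_mul, ← h1] at h2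
    have h3 : (n : D) * (a * x) = (n : D) * (x * a) := by
      have hcomm : a * (n : D) = (n : D) * a := by
        rw [← nsmul_eq_mul, ← nsmul_eq_mul']
      calc (n : D) * (a * x) = a * ((n : D) * x) := by
            rw [← mul_assoc, ← hcomm, mul_assoc]
        _ = (n : D) * x * a := h2
        _ = (n : D) * (x * a) := by rw [mul_assoc]
    exact hx (mul_left_cancel₀ hnD h3)
  obtain ⟨j, hj0, hjn, hb⟩ := hexists
  refine ⟨u j, hb, n - j + 1, by omega, ?_, ?_⟩
  · have h2 := claim1 j
    have h4 : a ^ (n - j) * (a * u j) = u j * a := by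
      rw [h2, ← mul_assoc, ← pow_add, show n - j + j = n by omega, han, one_mul]
    calc u j * a = a ^ (n - j) * (a * u j) := h4.symm
      _ = a ^ (n - j + 1) * u j := by rw [← mul_assoc, ← pow_succ]
  · intro hcon
    have h5 : a ^ (n - j) * a = a := by
      rw [← pow_succ]
      exact hcon
    have h6 : a ^ (n - j) = 1 := by
      have : a ^ (n - j) * a = 1 * a := by rw [h5, one_mul]
      exact mul_right_cancel₀ ha0 this
    exact hord (n - j) (by omega) (by omega) h6

end KuroshAux

/-- A non-central element `x` of a division ring `D` is a Kurosh element if there is a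
division subring `D₁` of `D` containing `x` such that `x` is non-central in `D₁` and
`D₁` is finite-dimensional over its own center. -/
def IsKurosh {D : Type*} [DivisionRing D] (x : D) : Prop :=
  ∃ D₁ : Subring D, (∀ y ∈ D₁, y⁻¹ ∈ D₁) ∧
    ∃ hx : x ∈ D₁, (⟨x, hx⟩ : D₁) ∉ Subring.center D₁ ∧
      Module.Finite (Subring.center D₁) D₁

set_option maxHeartbeats 4000000 in
set_option synthInstance.maxHeartbeats 1000000 in
/-- Every non-central torsion element of a division ring is a Kurosh element. -/
theorem stmt_4 (D : Type*) [DivisionRing D] (a : D)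
    (ha : a ∉ Subring.center D) (htor : ∃ n : ℕ, 0 < n ∧ a ^ n = 1) :
    IsKurosh a := by
  classical
  obtain ⟨n0, hn0, han0⟩ := htor
  have hfin : IsOfFinOrder a := isOfFinOrder_iff_pow_eq_one.mpr ⟨n0, hn0, han0⟩
  have hn : 0 < orderOf a := hfin.orderOf_pos
  set n := orderOf a with hndef
  have han : a ^ n = 1 := pow_orderOf_eq_one a
  have hord : ∀ k : ℕ, 0 < k → k < n → a ^ k ≠ 1 := by
    intro k hk1 hk2 hcon
    exact absurd (orderOf_le_of_pow_eq_one hk1 hcon) (by omega)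
  have hnD : ((n : ℕ) : D) ≠ 0 := kurosh_orderOf_cast_ne_zero a hfin
  have hx' : ∃ x : D, ¬ a * x = x * a := by
    by_contra hc
    push_neg at hc
    exact ha (Subring.mem_center_iff.mpr (fun g => (hc g).symm))
  have ha0 : a ≠ 0 := by
    intro h
    rw [h, zero_pow (by omega)] at han
    exact zero_ne_one han
  have hred : ∀ s : ℕ, a ^ s = a ^ (s % n) := by
    intro s
    conv_lhs => rw [← Nat.div_add_mod s n]
    rw [pow_add, pow_mul, han, one_pow, one_mul]
  have hred2 : ∀ s t : ℕ, s % n = t % n → a ^ s = a ^ t := fun s t h => by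
    rw [hred s, hred t, h]
  obtain ⟨b, hb0, i, hi0, hba, hia⟩ := kurosh_exists_conj_eq_pow a n hn han hord hnD hx'
  have hconj : b * a * b⁻¹ = a ^ i := by
    rw [hba, mul_assoc, mul_inv_cancel₀ hb0, mul_one]
  have hconjt : ∀ t : ℕ, b * a ^ t * b⁻¹ = a ^ (i * t) := by
    intro t
    rw [← kurosh_conj_pow_eq b a hb0 t, hconj, ← pow_mul]
  have hbat : ∀ t : ℕ, b * a ^ t = a ^ (i * t) * b := by
    intro t
    have := hconjt t
    rw [mul_inv_eq_iff_eq_mul₀ hb0] at this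
    exact this
  -- coprimality of i and n
  have hordi : orderOf (a ^ i) = n := by
    rw [hndef]
    apply orderOf_eq_orderOf_iff.mpr
    intro t
    have key : (a ^ i) ^ t = b * a ^ t * b⁻¹ := by
      rw [hconjt t, ← pow_mul]
    constructor
    · intro h
      rw [key] at h
      exact kurosh_conj_eq_one hb0 h
    · intro h
      rw [key, h, mul_one, mul_inv_cancel₀ hb0]
  have hcop : Nat.Coprime i n := by
    have h1 : orderOf (a ^ i) = orderOf a / Nat.gcd (orderOf a) i :=
      orderOf_pow' a (by omega)
    rw [hordi, ← hndef] at h1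
    have h2 : Nat.gcd n i ∣ n := Nat.gcd_dvd_left n i
    have h3 : Nat.gcd n i ≠ 0 := by
      intro h
      rw [h] at h1
      simp at h1
      omega
    obtain ⟨c, hc⟩ := h2
    rw [Nat.Coprime, Nat.gcd_comm]
    nlinarith [Nat.div_mul_cancel ⟨c, hc⟩, h1.symm, Nat.pos_of_ne_zero h3]
  haveI : NeZero n := ⟨by omega⟩
  set ii : (ZMod n)ˣ := ZMod.unitOfCoprime i hcop with hii
  -- k : the multiplicative inverse of i mod n
  set k : ℕ := ZMod.val ((ii⁻¹ : (ZMod n)ˣ) : ZMod n) with hk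
  have hik : (i * k) % n = 1 % n := by
    have h1 : ((i * k : ℕ) : ZMod n) = ((1 : ℕ) : ZMod n) := by
      push_cast
      rw [ZMod.natCast_val, ZMod.cast_id]
      have : ((i : ZMod n)) = (ii : ZMod n) := (ZMod.coe_unitOfCoprime i hcop).symm
      rw [this, ← Units.val_mul, mul_inv_cancel]
      simp
    exact (ZMod.natCast_eq_natCast_iff _ _ _).mp h1
  have haik : a ^ (i * k) = a := by
    rw [hred2 _ 1 hik, pow_one]
  set m : ℕ := orderOf ii with hm
  have hm0 : 0 < m := orderOf_pos ii
  have hm2 : 2 ≤ m := by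
    rcases Nat.lt_or_ge m 2 with h | h
    · exfalso
      have hm1 : m = 1 := by omega
      have : ii = 1 := by rw [← pow_one ii, ← hm1, hm, pow_orderOf_eq_one]
      have h2 : ((i : ℕ) : ZMod n) = ((1:ℕ) : ZMod n) := by
        rw [← ZMod.coe_unitOfCoprime i hcop, ← hii, this]
        simp
      have h3 := (ZMod.natCast_eq_natCast_iff _ _ _).mp h2
      exact absurd (by rw [hred2 i 1 h3, pow_one]) hia
    · exact h
  have him : i ^ m % n = 1 % n := by
    have h1 : ii ^ m = 1 := by rw [hm, pow_orderOf_eq_one]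
    have h2 : ((i ^ m : ℕ) : ZMod n) = ((1:ℕ) : ZMod n) := by
      push_cast
      rw [show ((i : ZMod n)) = (ii : ZMod n) from (ZMod.coe_unitOfCoprime i hcop).symm,
        ← Units.val_pow_eq_pow_val, h1]
      simp
    exact (ZMod.natCast_eq_natCast_iff _ _ _).mp h2
  -- z
  set z : D := b ^ m with hz
  have hz0 : z ≠ 0 := pow_ne_zero m hb0
  have hbz : b * z = z * b := by rw [hz, ← pow_succ, ← pow_succ']
  have hconjpow : ∀ t s : ℕ, b ^ t * a ^ s = a ^ (i ^ t * s) * b ^ t := by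
    intro t
    induction t with
    | zero => simp
    | succ t ih =>
        intro s
        rw [pow_succ', mul_assoc, ih s, ← mul_assoc, hbat, mul_assoc, ← pow_succ', ← mul_assoc]
        congr 2
        ring
  have hza : z * a = a * z := by
    have := hconjpow m 1
    rw [← hz, pow_one, mul_one] at this
    rw [this, hred2 _ 1 him, pow_one]
  -- the subfields
  set C : Subring D := Subring.centralizer {a, z} with hC
  have memC : ∀ x, x ∈ C ↔ (a * x = x * a ∧ z * x = x * z) := by
    intro x
    rw [hC, Subring.mem_centralizer_iff]
    constructor
    · intro h
      exact ⟨h a (by simp), h z (by simp)⟩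
    · rintro ⟨h1, h2⟩ g hg
      rcases hg with rfl | rfl
      · exact h1
      · exact h2
  set LF : Subfield D := kuroshCent (C : Set D) with hLF
  have memL : ∀ x, x ∈ LF ↔ ∀ c ∈ C, c * x = x * c := fun x => mem_kuroshCent
  have haC : a ∈ C := (memC a).mpr ⟨rfl, hza⟩
  have hzC : z ∈ C := (memC z).mpr ⟨hza.symm, rfl⟩
  have haL : a ∈ LF := (memL a).mpr (fun c hc => ((memC c).mp hc).1.symm)
  have hzL : z ∈ LF := (memL z).mpr (fun c hc => ((memC c).mp hc).2.symm)
  have hLsubC : ∀ x, x ∈ LF → x ∈ C := by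
    intro x hx
    rw [memC]
    exact ⟨(memL x).mp hx a haC, (memL x).mp hx z hzC⟩
  have hLcomm : ∀ x ∈ LF, ∀ y ∈ LF, x * y = y * x := by
    intro x hx y hy
    exact ((memL x).mp hx y (hLsubC y hy)).symm
  -- conjugation stability
  have hzconj : b * z * b⁻¹ = z := by
    rw [hbz, mul_assoc, mul_inv_cancel₀ hb0, mul_one]
  have hA : b * a ^ k * b⁻¹ = a := by
    rw [← kurosh_conj_pow_eq b a hb0 k, hconj, ← pow_mul, haik]
  have hA' : b⁻¹ * a ^ i * b = a := by
    rw [← hconj, kurosh_conj_cancel1 b a hb0]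
  have hz' : b⁻¹ * z * b = z := by
    rw [mul_assoc, ← hbz, inv_mul_cancel_left₀ hb0]
  have hconjC : ∀ x ∈ C, b * x * b⁻¹ ∈ C := by
    intro x hx
    rw [memC] at hx ⊢
    obtain ⟨hxa, hxz⟩ := hx
    constructor
    · have hcomm : a ^ k * x = x * a ^ k := (Commute.pow_left hxa k)
      have := kurosh_conj_comm hb0 hcomm
      rwa [hA] at this
    · have := kurosh_conj_comm hb0 hxz
      rwa [hzconj] at this
  have hconjC' : ∀ x ∈ C, b⁻¹ * x * b ∈ C := by
    intro x hx
    rw [memC] at hx ⊢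
    obtain ⟨hxa, hxz⟩ := hx
    constructor
    · have hcomm : a ^ i * x = x * a ^ i := (Commute.pow_left hxa i)
      have := kurosh_conj_comm (inv_ne_zero hb0) hcomm (c := b⁻¹)
      rwa [inv_inv, hA'] at this
    · have := kurosh_conj_comm (inv_ne_zero hb0) hxz (c := b⁻¹)
      rwa [inv_inv, hz'] at this
  have hconjL : ∀ x ∈ LF, b * x * b⁻¹ ∈ LF := by
    intro x hx
    rw [memL]
    intro c hc
    have hc' : b⁻¹ * c * b ∈ C := hconjC' c hc
    have hcomm : (b⁻¹ * c * b) * x = x * (b⁻¹ * c * b) := (memL x).mp hx _ hc'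
    have := kurosh_conj_comm hb0 hcomm
    rwa [kurosh_conj_cancel2 b c hb0] at this
  have hconjL' : ∀ x ∈ LF, b⁻¹ * x * b ∈ LF := by
    intro x hx
    rw [memL]
    intro c hc
    have hc' : b * c * b⁻¹ ∈ C := hconjC c hc
    have hcomm : (b * c * b⁻¹) * x = x * (b * c * b⁻¹) := (memL x).mp hx _ hc'
    have := kurosh_conj_comm (inv_ne_zero hb0) hcomm (c := b⁻¹)
    rwa [inv_inv, kurosh_conj_cancel1 b c hb0] at this
  -- the field structure on L
  letI instLF : Field ↥LF :=
    { (inferInstance : DivisionRing ↥LF) with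
      mul_comm := fun x y => Subtype.ext (hLcomm x.1 x.2 y.1 y.2) }
  -- the conjugation automorphism
  set σ : ↥LF ≃+* ↥LF :=
    { toFun := fun x => ⟨b * x * b⁻¹, hconjL x.1 x.2⟩
      invFun := fun x => ⟨b⁻¹ * x * b, hconjL' x.1 x.2⟩
      left_inv := fun x => Subtype.ext (by
        show b⁻¹ * (b * ↑x * b⁻¹) * b = ↑x
        exact kurosh_conj_cancel1 b x.1 hb0)
      right_inv := fun x => Subtype.ext (by
        show b * (b⁻¹ * ↑x * b) * b⁻¹ = ↑x
        exact kurosh_conj_cancel2 b x.1 hb0)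
      map_mul' := fun x y => Subtype.ext (by
        show b * (↑x * ↑y) * b⁻¹ = (b * ↑x * b⁻¹) * (b * ↑y * b⁻¹)
        exact (kurosh_conj_mul b hb0 x.1 y.1).symm)
      map_add' := fun x y => Subtype.ext (by
        show b * (↑x + ↑y) * b⁻¹ = b * ↑x * b⁻¹ + b * ↑y * b⁻¹
        rw [mul_add, add_mul]) } with hσ
  have hσapply : ∀ x : ↥LF, (↑(σ x) : D) = b * ↑x * b⁻¹ := fun x => rfl
  have hσpow : ∀ (t : ℕ) (x : ↥LF), (↑((σ ^ t) x) : D) = b ^ t * ↑x * (b ^ t)⁻¹ := by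
    intro t
    induction t with
    | zero => intro x; simp [pow_zero]
    | succ t ih =>
        intro x
        have h1 : (σ ^ (t + 1)) x = (σ ^ t) (σ x) := by
          rw [pow_succ]
          rfl
        rw [h1, ih (σ x), hσapply]
        simp [pow_succ, mul_inv_rev, mul_assoc]
  have hσm : σ ^ m = 1 := by
    apply RingEquiv.ext
    intro x
    apply Subtype.ext
    rw [hσpow m x, ← hz]
    have hzx : z * ↑x = ↑x * z := ((memC ↑x).mp (hLsubC ↑x x.2)).2
    rw [hzx, mul_assoc, mul_inv_cancel₀ hz0, mul_one]
    rfl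
  have hσfin : IsOfFinOrder σ := isOfFinOrder_iff_pow_eq_one.mpr ⟨m, hm0, hσm⟩
  set G := Subgroup.zpowers σ with hG
  haveI : Finite ↥G := hσfin.finite_zpowers.to_subtype
  set Z₀ : Subfield ↥LF := FixedPoints.subfield ↥G ↥LF with hZ₀
  haveI hFD : FiniteDimensional ↥Z₀ ↥LF := inferInstance
  -- the subfield Z of D
  set ZF : Subfield D := LF ⊓ kuroshCent {b} with hZF
  have memZ : ∀ x : D, x ∈ ZF ↔ x ∈ LF ∧ b * x = x * b := by
    intro x
    rw [hZF, Subfield.mem_inf, mem_kuroshCent]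
    constructor
    · rintro ⟨h1, h2⟩
      exact ⟨h1, h2 b rfl⟩
    · rintro ⟨h1, h2⟩
      refine ⟨h1, ?_⟩
      rintro g rfl
      exact h2
  have hfix : ∀ c : ↥Z₀, ((c : ↥LF) : D) ∈ ZF := by
    intro c
    have hfix1 : σ (c : ↥LF) = (c : ↥LF) := by
      have hc' : (↑c : ↥LF) ∈ MulAction.fixedPoints ↥G ↥LF := c.2
      exact hc' ⟨σ, Subgroup.mem_zpowers σ⟩
    rw [memZ]
    refine ⟨(c : ↥LF).2, ?_⟩
    have := congrArg (Subtype.val) hfix1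
    rw [hσapply] at this
    calc b * ↑↑c = b * ↑↑c * b⁻¹ * b := by
          rw [mul_assoc, inv_mul_cancel₀ hb0, mul_one]
      _ = ↑↑c * b := by rw [this]
  -- spanning family for L over Z
  obtain ⟨S, hS⟩ : ∃ S : Finset ↥LF, Submodule.span ↥Z₀ (S : Set ↥LF) = ⊤ :=
    Module.finite_def.mp hFD
  have hrepL : ∀ x : D, x ∈ LF → ∃ c : ↥LF → D,
      (∀ v, c v ∈ ZF) ∧ x = ∑ v ∈ S, c v * ↑v := by
    intro x hx
    have hmem : (⟨x, hx⟩ : ↥LF) ∈ Submodule.span ↥Z₀ (S : Set ↥LF) := by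
      rw [hS]; trivial
    obtain ⟨f, -, hf⟩ := Submodule.mem_span_finset.mp hmem
    refine ⟨fun v => ((f v : ↥LF) : D), fun v => hfix (f v), ?_⟩
    have h2 : ∑ v ∈ S, ((f v • v : ↥LF) : D) = x := by
      have h3 := congrArg (Subtype.val) hf
      rwa [AddSubmonoidClass.coe_finset_sum] at h3
    rw [← h2]
    refine Finset.sum_congr rfl fun v _ => ?_
    rfl
  -- the carrier of D₁
  set T : Set D := {x | ∃ f : ℕ → D, (∀ j, f j ∈ LF) ∧
    x = ∑ j ∈ Finset.range m, f j * b ^ j} with hT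
  have hbt0 : ∀ t : ℕ, (b : D) ^ t ≠ 0 := fun t => pow_ne_zero t hb0
  -- conjugation by powers of b preserves L
  have hconjLt : ∀ (t : ℕ) (x : D), x ∈ LF → b ^ t * x * (b ^ t)⁻¹ ∈ LF := by
    intro t x hx
    have := ((σ ^ t) ⟨x, hx⟩).2
    rwa [← hσpow t ⟨x, hx⟩]
  -- single terms are in T
  have hLT : ∀ (t : ℕ) (l : D), l ∈ LF → l * b ^ t ∈ T := by
    intro t
    induction t using Nat.strong_induction_on with
    | _ t ih =>
      intro l hl
      by_cases htm : t < m
      · refine ⟨fun j => if j = t then l else 0, fun j => ?_, ?_⟩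
        · dsimp only
          split
          · exact hl
          · exact zero_mem LF
        · rw [Finset.sum_eq_single_of_mem t (Finset.mem_range.mpr htm)]
          · dsimp only
            rw [if_pos rfl]
          · intro j _ hj
            dsimp only
            rw [if_neg hj, zero_mul]
      · have heq : l * b ^ t = (l * z) * b ^ (t - m) := by
          rw [mul_assoc, hz, ← pow_add, Nat.add_sub_cancel' (by omega)]
        rw [heq]
        exact ih (t - m) (by omega) (l * z) (mul_mem hl hzL)
  have hT0 : (0 : D) ∈ T := ⟨fun _ => 0, fun _ => zero_mem LF, by simp⟩
  have hTadd : ∀ x ∈ T, ∀ y ∈ T, x + y ∈ T := by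
    rintro x ⟨f, hf, rfl⟩ y ⟨g, hg, rfl⟩
    refine ⟨fun j => f j + g j, fun j => add_mem (hf j) (hg j), ?_⟩
    rw [← Finset.sum_add_distrib]
    exact Finset.sum_congr rfl fun j _ => (add_mul _ _ _).symm
  have hTsum : ∀ (s : Finset ℕ) (F : ℕ → D), (∀ i ∈ s, F i ∈ T) → (∑ i ∈ s, F i) ∈ T := by
    intro s F h
    exact Finset.sum_induction F (· ∈ T) (fun u v hu hv => hTadd u hu v hv) hT0 h
  have hTmul : ∀ x ∈ T, ∀ y ∈ T, x * y ∈ T := by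
    rintro x ⟨f, hf, rfl⟩ y ⟨g, hg, rfl⟩
    rw [Finset.sum_mul]
    have hsum : ∀ j ∈ Finset.range m,
        (f j * b ^ j) * (∑ k ∈ Finset.range m, g k * b ^ k) ∈ T := by
      intro j _
      rw [Finset.mul_sum]
      have hterm : ∀ k ∈ Finset.range m, (f j * b ^ j) * (g k * b ^ k) ∈ T := by
        intro k _
        have hc : b ^ j * g k = (b ^ j * g k * (b ^ j)⁻¹) * b ^ j := by
          rw [mul_assoc, inv_mul_cancel₀ (hbt0 j), mul_one]
        have heq : (f j * b ^ j) * (g k * b ^ k)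
            = (f j * (b ^ j * g k * (b ^ j)⁻¹)) * b ^ (j + k) := by
          calc (f j * b ^ j) * (g k * b ^ k) = f j * (b ^ j * g k) * b ^ k := by
                rw [mul_assoc, mul_assoc, mul_assoc]
            _ = f j * ((b ^ j * g k * (b ^ j)⁻¹) * b ^ j) * b ^ k := by rw [← hc]
            _ = (f j * (b ^ j * g k * (b ^ j)⁻¹)) * b ^ (j + k) := by
                simp [pow_add, mul_assoc]
        rw [heq]
        exact hLT (j + k) _ (mul_mem (hf j) (hconjLt j (g k) (hg k)))
      exact hTsum _ _ hterm
    exact hTsum _ _ hsum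
  have hTneg : ∀ x ∈ T, -x ∈ T := by
    rintro x ⟨f, hf, rfl⟩
    refine ⟨fun j => -(f j), fun j => neg_mem (hf j), ?_⟩
    rw [← Finset.sum_neg_distrib]
    exact Finset.sum_congr rfl fun j _ => (neg_mul _ _).symm
  have haT : a ∈ T := by
    have := hLT 0 a haL
    simpa using this
  have hbT : b ∈ T := by
    have := hLT 1 1 (one_mem LF)
    simpa using this
  have h1T : (1 : D) ∈ T := by
    have := hLT 0 1 (one_mem LF)
    simpa using this
  have hZT : ∀ c ∈ ZF, c ∈ T := by
    intro c hc
    have := hLT 0 c ((memZ c).mp hc).1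
    simpa using this
  have hZcomm : ∀ c ∈ ZF, ∀ x ∈ T, c * x = x * c := by
    rintro c hc x ⟨f, hf, rfl⟩
    rw [Finset.mul_sum, Finset.sum_mul]
    refine Finset.sum_congr rfl fun j _ => ?_
    obtain ⟨hcL, hcb⟩ := (memZ c).mp hc
    have h1 : c * f j = f j * c := hLcomm c hcL (f j) (hf j)
    have h2 : c * b ^ j = b ^ j * c := Commute.pow_right hcb.symm j
    rw [← mul_assoc, h1, mul_assoc, h2, ← mul_assoc]
  have hrepT : ∀ x ∈ T, ∃ c : ℕ → ↥LF → D, (∀ j v, c j v ∈ ZF) ∧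
      x = ∑ j ∈ Finset.range m, ∑ v ∈ S, c j v * (↑v * b ^ j) := by
    rintro x ⟨f, hf, rfl⟩
    choose c hc1 hc2 using fun j => hrepL (f j) (hf j)
    refine ⟨c, fun j v => hc1 j v, ?_⟩
    refine Finset.sum_congr rfl fun j _ => ?_
    rw [hc2 j, Finset.sum_mul]
    exact Finset.sum_congr rfl fun v _ => by rw [mul_assoc]
  set D₁ : Subring D :=
    { carrier := T
      zero_mem' := hT0
      one_mem' := h1T
      add_mem' := fun hx hy => hTadd _ hx _ hy
      mul_mem' := fun hx hy => hTmul _ hx _ hy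
      neg_mem' := fun hx => hTneg _ hx } with hD₁
  have memD₁ : ∀ x : D, x ∈ D₁ ↔ x ∈ T := fun x => Iff.rfl
  refine ⟨D₁, ?_, haT, ?_, ?_⟩
  · -- closed under inverses
    intro y hy
    rcases eq_or_ne y 0 with rfl | hy0
    · simpa using hT0
    · set W : Submodule ↥ZF D :=
        { carrier := T
          add_mem' := fun hx hx' => hTadd _ hx _ hx'
          zero_mem' := hT0
          smul_mem' := fun c x hx => by
            have h1 : (c : D) * x ∈ T := hTmul _ (hZT _ c.2) _ hx
            exact h1 } with hW
      haveI hWfd : FiniteDimensional ↥ZF ↥W := by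
        refine ⟨⟨((Finset.range m) ×ˢ S).image
          (fun p => (⟨(↑p.2 : D) * b ^ p.1, hLT p.1 ↑p.2 p.2.2⟩ : ↥W)), ?_⟩⟩
        rw [eq_top_iff]
        rintro ⟨x, hx⟩ -
        obtain ⟨c, hcZ, hxeq⟩ := hrepT x hx
        have hxw : (⟨x, hx⟩ : ↥W) = ∑ j ∈ Finset.range m, ∑ v ∈ S,
            (⟨c j v, hcZ j v⟩ : ↥ZF) • (⟨(↑v : D) * b ^ j, hLT j ↑v v.2⟩ : ↥W) := by
          apply Subtype.ext
          show x = _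
          rw [AddSubmonoidClass.coe_finset_sum]
          calc x = ∑ j ∈ Finset.range m, ∑ v ∈ S, c j v * ((↑v : D) * b ^ j) := hxeq
            _ = _ := by
              refine Finset.sum_congr rfl fun j _ => ?_
              rw [AddSubmonoidClass.coe_finset_sum]
              exact Finset.sum_congr rfl fun v _ => rfl
        rw [hxw]
        refine Submodule.sum_mem _ fun j hj => Submodule.sum_mem _ fun v hv => ?_
        refine Submodule.smul_mem _ _ (Submodule.subset_span ?_)
        simp only [Finset.coe_image, Set.mem_image, Finset.mem_coe, Finset.mem_product]
        exact ⟨(j, v), ⟨hj, hv⟩, rfl⟩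
      set μ : ↥W →ₗ[↥ZF] ↥W :=
        { toFun := fun w => ⟨y * ↑w, hTmul y hy ↑w w.2⟩
          map_add' := fun u v => Subtype.ext (by
            show y * (↑u + ↑v) = y * ↑u + y * ↑v
            rw [mul_add])
          map_smul' := fun c u => Subtype.ext (by
            show y * ((c : D) * ↑u) = (c : D) * (y * ↑u)
            rw [← mul_assoc, ← hZcomm (c : D) c.2 y hy, mul_assoc]) } with hμ
      have hinj : Function.Injective μ := by
        intro u v huv
        apply Subtype.ext
        have := congrArg Subtype.val huv
        exact mul_left_cancel₀ hy0 this
      have hsurj := (LinearMap.injective_iff_surjective).mp hinj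
      obtain ⟨w, hw⟩ := hsurj ⟨1, h1T⟩
      have h1 : y * ↑w = 1 := congrArg Subtype.val hw
      have h2 : y⁻¹ = ↑w := inv_eq_of_mul_eq_one_right h1
      rw [h2]
      exact w.2
  · -- a is not central in D₁
    intro hcen
    rw [Subring.mem_center_iff] at hcen
    have h1 := hcen ⟨b, hbT⟩
    have h2 : b * a = a * b := congrArg Subtype.val h1
    rw [hba] at h2
    exact hia (mul_right_cancel₀ hb0 h2)
  · -- finite over center
    have hcenmem : ∀ (c : D) (hc : c ∈ ZF), (⟨c, hZT c hc⟩ : ↥D₁) ∈ Subring.center ↥D₁ := by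
      intro c hc
      rw [Subring.mem_center_iff]
      intro g
      apply Subtype.ext
      show (g : D) * c = c * (g : D)
      exact (hZcomm c hc (g : D) g.2).symm
    refine ⟨⟨((Finset.range m) ×ˢ S).image
      (fun p => (⟨(↑p.2 : D) * b ^ p.1, hLT p.1 ↑p.2 p.2.2⟩ : ↥D₁)), ?_⟩⟩
    rw [eq_top_iff]
    rintro ⟨x, hx⟩ -
    obtain ⟨c, hcZ, hxeq⟩ := hrepT x hx
    have hxw : (⟨x, hx⟩ : ↥D₁) = ∑ j ∈ Finset.range m, ∑ v ∈ S,
        (⟨⟨c j v, hZT _ (hcZ j v)⟩, hcenmem _ (hcZ j v)⟩ : Subring.center ↥D₁) •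
          (⟨(↑v : D) * b ^ j, hLT j ↑v v.2⟩ : ↥D₁) := by
      apply Subtype.ext
      show x = _
      rw [AddSubmonoidClass.coe_finset_sum]
      calc x = ∑ j ∈ Finset.range m, ∑ v ∈ S, c j v * ((↑v : D) * b ^ j) := hxeq
        _ = _ := by
          refine Finset.sum_congr rfl fun j _ => ?_
          rw [AddSubmonoidClass.coe_finset_sum]
          exact Finset.sum_congr rfl fun v _ => rfl
    rw [hxw]
    refine Submodule.sum_mem _ fun j hj => Submodule.sum_mem _ fun v hv => ?_
    refine Submodule.smul_mem _ _ (Submodule.subset_span ?_)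
    simp only [Finset.coe_image, Set.mem_image, Finset.mem_coe, Finset.mem_product]
    exact ⟨(j, v), ⟨hj, hv⟩, rfl⟩
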